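/- arXiv:2310.03774 — 2 statements merged into one kernel-verified Lean document; each statement's English description precedes it below -/
import Mathlib

section
/- Let u* = (u*_1,…,u*_n) be an open-loop Nash equilibrium of the delay-free game with trajectory y* = y_{u*} from y_0 ∈ ℝⁿ. Then for every player i, u*_i(t) = −(1/(r_i·d_i))·B̂_iᵀ·exp((T−t)Λᵀ)·L̂_i·y*(T) for almost every t ∈ [0,T]. -/
open Matrix MeasureTheory
open scoped Matrix

noncomputable section

/-- The matrix exponential of a real `n × n` matrix. -/
def mexp {n : ℕ} (A : Matrix (Fin n) (Fin n) ℝ) : Matrix (Fin n) (Fin n) ℝ :=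
  NormedSpace.exp A

/-- An admissible control of the delayed game: a bounded measurable function `u : ℝ → ℝ`
with `u s = 0` for `s < 0`. -/
def AdmissibleD (u : ℝ → ℝ) : Prop :=
  Measurable u ∧ (∃ C, ∀ s, |u s| ≤ C) ∧ ∀ s < 0, u s = 0

/-- An admissible control of the delay-free game: a bounded measurable function. -/
def AdmissibleF (u : ℝ → ℝ) : Prop :=
  Measurable u ∧ ∃ C, ∀ s, |u s| ≤ C

/-- Data of the differential games of opinion formation: the system matrix `Λ`
(the continuous-time Hegselmann–Krause matrix `Λ = D⁻¹A − I`), the input delay `τ`,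
the terminal time `tf`, and for each player `i` the input vector `B i`, the control
weight `r i`, the neighborhood size `d i = |𝒩ᵢ|`, the agent-`i` graph Laplacian `L i`
and the stubbornness coefficient `ω i`. -/
structure GameData (n : ℕ) where
  Λ : Matrix (Fin n) (Fin n) ℝ
  τ : ℝ
  tf : ℝ
  B : Fin n → Fin n → ℝ
  r : Fin n → ℝ
  d : Fin n → ℝ
  L : Fin n → Matrix (Fin n) (Fin n) ℝ
  ω : Fin n → ℝ

namespace GameData

variable {n : ℕ} (G : GameData n)

/-- The standing hypotheses: `τ ≥ 0`, `t_f > τ`, `rᵢ > 0`, `dᵢ > 0`, each `Lᵢ` symmetric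
positive semidefinite, and `ωᵢ ∈ [0,1]`. -/
def Valid : Prop :=
  0 ≤ G.τ ∧ G.τ < G.tf ∧ (∀ i, 0 < G.r i) ∧ (∀ i, 0 < G.d i) ∧
    (∀ i, (G.L i).PosSemidef) ∧ ∀ i, G.ω i ∈ Set.Icc (0 : ℝ) 1

/-- `T = t_f − τ`. -/
def T : ℝ := G.tf - G.τ

/-- `B̂ᵢ = exp(−τΛ)·Bᵢ`. -/
def Bhat (i : Fin n) : Fin n → ℝ := (mexp ((-G.τ) • G.Λ)).mulVec (G.B i)

/-- `L̂ᵢ = exp(τΛᵀ)·Lᵢ·exp(τΛ)`. -/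
def Lhat (i : Fin n) : Matrix (Fin n) (Fin n) ℝ :=
  mexp (G.τ • G.Λᵀ) * G.L i * mexp (G.τ • G.Λ)

/-- `Sᵢ = (1/rᵢ)·B̂ᵢ·B̂ᵢᵀ`. -/
def S (i : Fin n) : Matrix (Fin n) (Fin n) ℝ :=
  (1 / G.r i) • vecMulVec (G.Bhat i) (G.Bhat i)

/-- The matrix `∫₀ᵗ exp((t−s)Λ)·Sᵢ·exp((T−s)Λᵀ) ds` (entrywise integral). -/
def Phi (T' : ℝ) (i : Fin n) (t : ℝ) : Matrix (Fin n) (Fin n) ℝ :=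
  Matrix.of fun a b =>
    ∫ s in (0:ℝ)..t, (mexp ((t - s) • G.Λ) * G.S i * mexp ((T' - s) • G.Λᵀ)) a b

/-- `Ψᵢ = ∫₀ᵀ exp((T−s)Λ)·Sᵢ·exp((T−s)Λᵀ) ds` with `T = t_f − τ`. -/
def Psi (i : Fin n) : Matrix (Fin n) (Fin n) ℝ := G.Phi G.T i G.T

/-- `H = I + ∑ⱼ (1/dⱼ)·Ψⱼ·L̂ⱼ`. -/
def H : Matrix (Fin n) (Fin n) ℝ :=
  1 + ∑ j : Fin n, (1 / G.d j) • (G.Psi j * G.Lhat j)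

/-- `Wᵢ`: the matrix whose `(i,i)` entry is `ωᵢ` and all other entries are `0`. -/
def W (i : Fin n) : Matrix (Fin n) (Fin n) ℝ := Matrix.single i i (G.ω i)

/-- `Ŵᵢ = exp(τΛᵀ)·Wᵢ·exp(τΛ)`. -/
def What (i : Fin n) : Matrix (Fin n) (Fin n) ℝ :=
  mexp (G.τ • G.Λᵀ) * G.W i * mexp (G.τ • G.Λ)

/-- `Ĥ = I + ∑ⱼ Ψⱼ·(Ŵⱼ + ((1−ωⱼ)/dⱼ)·L̂ⱼ)`. -/
def Hhat : Matrix (Fin n) (Fin n) ℝ :=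
  1 + ∑ j : Fin n, G.Psi j * (G.What j + ((1 - G.ω j) / G.d j) • G.Lhat j)

/-- The trajectory of the delayed game:
`x_u(t) = exp(tΛ)·x₀ + ∫₀ᵗ exp((t−s)Λ)·(∑ⱼ Bⱼ·uⱼ(s−τ)) ds`. -/
def xtraj (x0 : Fin n → ℝ) (u : Fin n → ℝ → ℝ) (t : ℝ) : Fin n → ℝ :=
  (mexp (t • G.Λ)).mulVec x0 +
    ∫ s in (0:ℝ)..t, (mexp ((t - s) • G.Λ)).mulVec (∑ j : Fin n, u j (s - G.τ) • G.B j)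

/-- The trajectory of the delay-free game:
`y_u(t) = exp(tΛ)·y₀ + ∫₀ᵗ exp((t−s)Λ)·(∑ⱼ B̂ⱼ·uⱼ(s)) ds`. -/
def ytraj (y0 : Fin n → ℝ) (u : Fin n → ℝ → ℝ) (t : ℝ) : Fin n → ℝ :=
  (mexp (t • G.Λ)).mulVec y0 +
    ∫ s in (0:ℝ)..t, (mexp ((t - s) • G.Λ)).mulVec (∑ j : Fin n, u j s • G.Bhat j)

/-- Player `i`'s cost in the delayed game:
`Jᵢ(u) = (1/dᵢ)·x_u(t_f)ᵀ·Lᵢ·x_u(t_f) + ∫₀^{t_f} rᵢ·uᵢ(t−τ)² dt`. -/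
def J (x0 : Fin n → ℝ) (i : Fin n) (u : Fin n → ℝ → ℝ) : ℝ :=
  (1 / G.d i) * (G.xtraj x0 u G.tf ⬝ᵥ (G.L i).mulVec (G.xtraj x0 u G.tf)) +
    ∫ t in (0:ℝ)..G.tf, G.r i * u i (t - G.τ) ^ 2

/-- Player `i`'s cost in the delay-free game:
`Ĵᵢ(u) = (1/dᵢ)·y_u(T)ᵀ·L̂ᵢ·y_u(T) + ∫₀ᵀ rᵢ·uᵢ(t)² dt`. -/
def JF (y0 : Fin n → ℝ) (i : Fin n) (u : Fin n → ℝ → ℝ) : ℝ :=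
  (1 / G.d i) * (G.ytraj y0 u G.T ⬝ᵥ (G.Lhat i).mulVec (G.ytraj y0 u G.T)) +
    ∫ t in (0:ℝ)..G.T, G.r i * u i t ^ 2

/-- Player `i`'s stubborn cost in the delayed game. -/
def Jstub (x0 : Fin n → ℝ) (i : Fin n) (u : Fin n → ℝ → ℝ) : ℝ :=
  (G.xtraj x0 u G.tf - x0) ⬝ᵥ (G.W i).mulVec (G.xtraj x0 u G.tf - x0) +
    ((1 - G.ω i) / G.d i) * (G.xtraj x0 u G.tf ⬝ᵥ (G.L i).mulVec (G.xtraj x0 u G.tf)) +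
    ∫ t in (0:ℝ)..G.tf, G.r i * u i (t - G.τ) ^ 2

/-- Player `i`'s stubborn cost in the delay-free game, with reference opinion `x₀`. -/
def JstubF (x0 y0 : Fin n → ℝ) (i : Fin n) (u : Fin n → ℝ → ℝ) : ℝ :=
  ((mexp (G.τ • G.Λ)).mulVec (G.ytraj y0 u G.T) - x0) ⬝ᵥ
      (G.W i).mulVec ((mexp (G.τ • G.Λ)).mulVec (G.ytraj y0 u G.T) - x0) +
    ((1 - G.ω i) / G.d i) * (G.ytraj y0 u G.T ⬝ᵥ (G.Lhat i).mulVec (G.ytraj y0 u G.T)) +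
    ∫ t in (0:ℝ)..G.T, G.r i * u i t ^ 2

/-- Open-loop Nash equilibrium of the delayed game. -/
def NashD (x0 : Fin n → ℝ) (u : Fin n → ℝ → ℝ) : Prop :=
  (∀ i, AdmissibleD (u i)) ∧
    ∀ i, ∀ v : ℝ → ℝ, AdmissibleD v →
      G.J x0 i u ≤ G.J x0 i (Function.update u i v)

/-- Open-loop Nash equilibrium of the delay-free game. -/
def NashF (y0 : Fin n → ℝ) (u : Fin n → ℝ → ℝ) : Prop :=
  (∀ i, AdmissibleF (u i)) ∧
    ∀ i, ∀ v : ℝ → ℝ, AdmissibleF v →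
      G.JF y0 i u ≤ G.JF y0 i (Function.update u i v)

/-- Open-loop Nash equilibrium of the stubborn delayed game. -/
def NashStubD (x0 : Fin n → ℝ) (u : Fin n → ℝ → ℝ) : Prop :=
  (∀ i, AdmissibleD (u i)) ∧
    ∀ i, ∀ v : ℝ → ℝ, AdmissibleD v →
      G.Jstub x0 i u ≤ G.Jstub x0 i (Function.update u i v)

/-- Open-loop Nash equilibrium of the stubborn delay-free game. -/
def NashStubF (x0 y0 : Fin n → ℝ) (u : Fin n → ℝ → ℝ) : Prop :=
  (∀ i, AdmissibleF (u i)) ∧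
    ∀ i, ∀ v : ℝ → ℝ, AdmissibleF v →
      G.JstubF x0 y0 i u ≤ G.JstubF x0 y0 i (Function.update u i v)

end GameData


section ExpCont
attribute [local instance] Matrix.linftyOpNormedAddCommGroup Matrix.linftyOpNormedRing
  Matrix.linftyOpNormedAlgebra

lemma mexp_entry_continuous {n : ℕ} (Λ : Matrix (Fin n) (Fin n) ℝ) (a b : Fin n) :
    Continuous fun t : ℝ => mexp (t • Λ) a b := by
  have h : Continuous fun t : ℝ => NormedSpace.exp (t • Λ) :=
    NormedSpace.exp_continuous.comp (continuous_id.smul continuous_const)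
  exact ((continuous_apply b).comp (continuous_apply a)).comp h
end ExpCont

lemma mexp_comp_entry_continuous {n : ℕ} (Λ : Matrix (Fin n) (Fin n) ℝ) (T : ℝ) (a b : Fin n) :
    Continuous fun s : ℝ => mexp ((T - s) • Λ) a b :=
  (mexp_entry_continuous Λ a b).comp (continuous_const.sub continuous_id)

lemma mexp_mulVec_continuous {n : ℕ} (Λ : Matrix (Fin n) (Fin n) ℝ) (T : ℝ) (c : Fin n → ℝ) :
    Continuous fun s : ℝ => (mexp ((T - s) • Λ)).mulVec c := by
  apply continuous_pi
  intro a
  simp only [Matrix.mulVec, dotProduct]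
  exact continuous_finset_sum _ fun j _ =>
    (mexp_comp_entry_continuous Λ T a j).mul continuous_const

lemma mexp_smul_transpose {n : ℕ} (A : Matrix (Fin n) (Fin n) ℝ) (t : ℝ) :
    (mexp (t • A))ᵀ = mexp (t • Aᵀ) := by
  rw [mexp, mexp, ← Matrix.transpose_smul, Matrix.exp_transpose]

lemma intervalIntegrable_of_bound {E : Type*} [NormedAddCommGroup E] {f : ℝ → E} {a b : ℝ}
    (C : ℝ) (hm : AEStronglyMeasurable f volume)
    (h : ∀ s ∈ Set.uIcc a b, ‖f s‖ ≤ C) : IntervalIntegrable f volume a b := by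
  rw [intervalIntegrable_iff]
  refine Integrable.mono' (g := fun _ => C) ?_ hm.restrict ?_
  · exact integrableOn_const (by rw [Set.uIoc]; exact measure_Ioc_lt_top.ne)
  · exact (ae_restrict_iff' measurableSet_uIoc).2
      (Filter.Eventually.of_forall fun s hs => h s (Set.uIoc_subset_uIcc hs))

lemma II_smul_cont {n : ℕ} {f : ℝ → ℝ} (hf : Measurable f) {C : ℝ} (hC : ∀ s, |f s| ≤ C)
    {F : ℝ → Fin n → ℝ} (hF : Continuous F) (a b : ℝ) :
    IntervalIntegrable (fun s => f s • F s) volume a b := by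
  obtain ⟨K, hK⟩ := isCompact_uIcc.exists_bound_of_continuousOn (hF.continuousOn (s := Set.uIcc a b))
  have hC0 : 0 ≤ C := le_trans (abs_nonneg _) (hC a)
  refine intervalIntegrable_of_bound (C * max K 0) (Measurable.aestronglyMeasurable ?_) ?_
  · exact hf.smul hF.measurable
  · intro s hs
    rw [norm_smul, Real.norm_eq_abs]
    exact mul_le_mul (hC s) (le_max_of_le_left (hK s hs)) (norm_nonneg _) hC0

lemma II_mul {f g : ℝ → ℝ} {a b : ℝ} (hf : Measurable f) (hg : Measurable g)
    {C D : ℝ} (hC : ∀ s ∈ Set.uIcc a b, |f s| ≤ C) (hD : ∀ s ∈ Set.uIcc a b, |g s| ≤ D) :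
    IntervalIntegrable (fun s => f s * g s) volume a b := by
  refine intervalIntegrable_of_bound (C * D) (Measurable.aestronglyMeasurable (hf.mul hg)) ?_
  intro s hs
  rw [Real.norm_eq_abs, abs_mul]
  exact mul_le_mul (hC s hs) (hD s hs) (abs_nonneg _)
    (le_trans (abs_nonneg _) (hC a Set.left_mem_uIcc))

lemma eq_zero_of_quad_nonneg {a b : ℝ} (h : ∀ ε : ℝ, 0 ≤ ε * a + ε ^ 2 * b) : a = 0 := by
  by_contra ha
  set c : ℝ := max b 1 with hc
  have hc1 : (1:ℝ) ≤ c := le_max_right _ _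
  have hc0 : (0:ℝ) < c := lt_of_lt_of_le one_pos hc1
  have hb : b ≤ c := le_max_left _ _
  have h1 := h (-(a / (2 * c)))
  have he : a / (2 * c) ≠ 0 := div_ne_zero ha (by positivity)
  have he2 : 0 < (a / (2 * c)) ^ 2 := by positivity
  have hexp : -(a / (2 * c)) * a = -(2 * c) * (a / (2 * c))^2 := by
    field_simp
  nlinarith [h1, he2, mul_pos hc0 he2]

/-- Necessity of the Pontryagin condition: if `u` is an open-loop Nash equilibrium of the
delay-free game with trajectory `y* = y_u` from `y₀`, then for every player `i`,
`uᵢ(t) = −(1/(rᵢdᵢ))·B̂ᵢᵀ·exp((T−t)Λᵀ)·L̂ᵢ·y*(T)` for almost every `t ∈ [0,T]`. -/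
theorem statement_9 {n : ℕ} (G : GameData n) (hG : G.Valid) (y0 : Fin n → ℝ)
    (u : Fin n → ℝ → ℝ) (hNash : G.NashF y0 u) :
    ∀ i, ∀ᵐ t ∂(volume.restrict (Set.Icc (0:ℝ) G.T)),
      u i t = -(1 / (G.r i * G.d i)) *
        (G.Bhat i ⬝ᵥ (mexp ((G.T - t) • G.Λᵀ)).mulVec
          ((G.Lhat i).mulVec (G.ytraj y0 u G.T))) := by
  obtain ⟨hτ0, hτtf, hr, hd, hL, hω⟩ := hG
  intro i
  have hT : (0:ℝ) ≤ G.T := by unfold GameData.T; linarith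
  set T := G.T with hTdef
  set Lh : Matrix (Fin n) (Fin n) ℝ := G.Lhat i with hLh
  set y : Fin n → ℝ := G.ytraj y0 u T with hy
  set q : Fin n → ℝ := Lh.mulVec y with hq
  set F : ℝ → Fin n → ℝ := fun s => (mexp ((T - s) • G.Λ)).mulVec (G.Bhat i) with hF
  have hFc : Continuous F := mexp_mulVec_continuous _ _ _
  set p : ℝ → ℝ := fun s => F s ⬝ᵥ q with hp
  have hpc : Continuous p := by
    simp only [hp, dotProduct]
    exact continuous_finset_sum _ fun j _ => ((continuous_apply j).comp hFc).mul continuous_const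
  obtain ⟨hum, Cu, hCu⟩ := hNash.1 i
  have hCu0 : 0 ≤ Cu := le_trans (abs_nonneg _) (hCu 0)
  obtain ⟨Cp, hCp⟩ := isCompact_uIcc.exists_bound_of_continuousOn
    (hpc.continuousOn : ContinuousOn p (Set.uIcc (0:ℝ) T))
  have hCp' : ∀ s ∈ Set.uIcc (0:ℝ) T, |p s| ≤ Cp := by
    intro s hs; rw [← Real.norm_eq_abs]; exact hCp s hs
  have hCp0 : 0 ≤ Cp := le_trans (abs_nonneg _) (hCp' 0 Set.left_mem_uIcc)
  -- the adjoint-based function g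
  set g : ℝ → ℝ := fun s => G.r i * u i s + (1 / G.d i) * p s with hgdef
  have hgm : Measurable g := (measurable_const.mul hum).add (measurable_const.mul hpc.measurable)
  set Cg : ℝ := |G.r i| * Cu + |1 / G.d i| * Cp with hCgdef
  have hCg0 : 0 ≤ Cg := by positivity
  have hgb : ∀ s ∈ Set.uIcc (0:ℝ) T, |g s| ≤ Cg := by
    intro s hs
    refine (abs_add_le _ _).trans ?_
    rw [abs_mul, abs_mul]
    exact add_le_add (mul_le_mul_of_nonneg_left (hCu s) (abs_nonneg _))
      (mul_le_mul_of_nonneg_left (hCp' s hs) (abs_nonneg _))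
  -- the test control w
  set w : ℝ → ℝ := fun s => if s ∈ Set.Icc (0:ℝ) T then g s else 0 with hwdef
  have hwm : Measurable w := Measurable.ite measurableSet_Icc hgm measurable_const
  have hwb : ∀ s, |w s| ≤ Cg := by
    intro s
    by_cases hs : s ∈ Set.Icc (0:ℝ) T
    · rw [hwdef]; simp only [if_pos hs]
      exact hgb s (by rwa [Set.uIcc_of_le hT])
    · rw [hwdef]; simp only [if_neg hs, abs_zero]; exact hCg0
  -- the perturbation direction z
  set z : Fin n → ℝ := ∫ s in (0:ℝ)..T, w s • F s with hz
  have hIz : IntervalIntegrable (fun s => w s • F s) volume 0 T :=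
    II_smul_cont hwm hwb hFc 0 T
  have hIj : ∀ j : Fin n, IntervalIntegrable
      (fun s => u j s • (mexp ((T - s) • G.Λ)).mulVec (G.Bhat j)) volume 0 T := by
    intro j
    obtain ⟨hm, C, hC⟩ := hNash.1 j
    exact II_smul_cont hm hC (mexp_mulVec_continuous _ _ _) 0 T
  have hbase_eq : ∀ s : ℝ, (mexp ((T - s) • G.Λ)).mulVec (∑ j : Fin n, u j s • G.Bhat j)
      = ∑ j : Fin n, u j s • (mexp ((T - s) • G.Λ)).mulVec (G.Bhat j) := by
    intro s
    simp only [← Matrix.mulVecLin_apply, map_sum, LinearMap.map_smul]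
  have hIbase : IntervalIntegrable
      (fun s => (mexp ((T - s) • G.Λ)).mulVec (∑ j : Fin n, u j s • G.Bhat j)) volume 0 T := by
    have hsum := IntervalIntegrable.sum Finset.univ (fun j _ => hIj j)
    have hfe : (∑ j : Fin n, fun s => u j s • (mexp ((T - s) • G.Λ)).mulVec (G.Bhat j))
        = fun s => ∑ j : Fin n, u j s • (mexp ((T - s) • G.Λ)).mulVec (G.Bhat j) := by
      funext s; simp [Finset.sum_apply]
    rw [hfe] at hsum
    simpa only [hbase_eq] using hsum
  -- the perturbed trajectory
  have htraj : ∀ ε : ℝ,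
      G.ytraj y0 (Function.update u i (fun s => u i s + ε * w s)) T = y + ε • z := by
    intro ε
    have hsum : ∀ s : ℝ, (∑ j : Fin n, Function.update u i (fun s => u i s + ε * w s) j s • G.Bhat j)
        = (∑ j : Fin n, u j s • G.Bhat j) + (ε * w s) • G.Bhat i := by
      intro s
      have hterm : ∀ j : Fin n, Function.update u i (fun s => u i s + ε * w s) j s • G.Bhat j
          = u j s • G.Bhat j + if j = i then (ε * w s) • G.Bhat i else 0 := by
        intro j
        rcases eq_or_ne j i with rfl | hji
        · rw [Function.update_self, if_pos rfl, add_smul]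
        · rw [Function.update_of_ne hji, if_neg hji, add_zero]
      rw [Finset.sum_congr rfl fun j _ => hterm j, Finset.sum_add_distrib,
        Finset.sum_ite_eq' Finset.univ i (fun _ => (ε * w s) • G.Bhat i),
        if_pos (Finset.mem_univ i)]
    have hIpert : IntervalIntegrable (fun s => (ε * w s) • F s) volume 0 T :=
      II_smul_cont (measurable_const.mul hwm) (C := |ε| * Cg)
        (fun s => by show |ε * w s| ≤ |ε| * Cg; rw [abs_mul]; exact mul_le_mul_of_nonneg_left (hwb s) (abs_nonneg ε))
        hFc 0 T
    calc G.ytraj y0 (Function.update u i fun s => u i s + ε * w s) T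
        = (mexp (T • G.Λ)).mulVec y0 + ∫ s in (0:ℝ)..T,
            ((mexp ((T - s) • G.Λ)).mulVec (∑ j : Fin n, u j s • G.Bhat j) + (ε * w s) • F s) := by
          unfold GameData.ytraj
          congr 1
          refine intervalIntegral.integral_congr fun s _ => ?_
          rw [hsum s, Matrix.mulVec_add, Matrix.mulVec_smul]
      _ = y + ε • z := by
          rw [intervalIntegral.integral_add hIbase hIpert]
          have hps : (fun s => (ε * w s) • F s) = fun s => ε • (w s • F s) := by
            funext s; exact mul_smul ε (w s) (F s)
          rw [hps, intervalIntegral.integral_smul, hy]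
          unfold GameData.ytraj
          rw [hz]
          exact (add_assoc _ _ _).symm
  -- symmetry of Lhat
  have hLsym : (G.L i)ᵀ = G.L i := by
    have h := (hL i).1
    rwa [Matrix.IsHermitian, Matrix.conjTranspose_eq_transpose_of_trivial] at h
  have hLhsym : Lhᵀ = Lh := by
    rw [hLh]
    unfold GameData.Lhat
    simp only [Matrix.transpose_mul, mexp_smul_transpose, Matrix.transpose_transpose, hLsym,
      Matrix.mul_assoc]
  have hdotsym : ∀ x v : Fin n → ℝ, x ⬝ᵥ Lh.mulVec v = v ⬝ᵥ Lh.mulVec x := by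
    intro x v
    calc x ⬝ᵥ Lh.mulVec v = (x ᵥ* Lh) ⬝ᵥ v := Matrix.dotProduct_mulVec x Lh v
      _ = (x ᵥ* Lhᵀ) ⬝ᵥ v := by rw [hLhsym]
      _ = (Lh.mulVec x) ⬝ᵥ v := by rw [Matrix.vecMul_transpose]
      _ = v ⬝ᵥ Lh.mulVec x := dotProduct_comm _ _
  -- quadratic form expansion
  have hQ : ∀ ε : ℝ, (y + ε • z) ⬝ᵥ Lh.mulVec (y + ε • z)
      = y ⬝ᵥ Lh.mulVec y + ε * (2 * (z ⬝ᵥ q)) + ε ^ 2 * (z ⬝ᵥ Lh.mulVec z) := by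
    intro ε
    rw [hq, Matrix.mulVec_add, dotProduct_add, add_dotProduct,
      add_dotProduct, Matrix.mulVec_smul, dotProduct_smul, dotProduct_smul,
      smul_dotProduct, smul_dotProduct, hdotsym y z]
    simp only [smul_eq_mul]
    ring
  -- scalar integrals
  have hIuw : IntervalIntegrable (fun t => u i t * w t) volume 0 T :=
    II_mul hum hwm (fun s _ => hCu s) (fun s _ => hwb s)
  have hIww : IntervalIntegrable (fun t => w t * w t) volume 0 T :=
    II_mul hwm hwm (fun s _ => hwb s) (fun s _ => hwb s)
  have hIuu : IntervalIntegrable (fun t => u i t * u i t) volume 0 T :=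
    II_mul hum hum (fun s _ => hCu s) (fun s _ => hCu s)
  have hIwp : IntervalIntegrable (fun s => w s * p s) volume 0 T :=
    II_mul hwm hpc.measurable (fun s _ => hwb s) hCp'
  set I1 : ℝ := ∫ t in (0:ℝ)..T, u i t * w t with hI1
  set I2 : ℝ := ∫ t in (0:ℝ)..T, w t * w t with hI2
  have hInt : ∀ ε : ℝ, (∫ t in (0:ℝ)..T, G.r i * (u i t + ε * w t) ^ 2)
      = (∫ t in (0:ℝ)..T, G.r i * u i t ^ 2) + ε * (2 * G.r i * I1) + ε ^ 2 * (G.r i * I2) := by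
    intro ε
    have e0 : (fun t => G.r i * u i t ^ 2) = fun t => G.r i * (u i t * u i t) := by
      funext t; ring
    have hIru : IntervalIntegrable (fun t => G.r i * u i t ^ 2) volume 0 T := by
      rw [e0]; exact hIuu.const_mul _
    have e1 : (fun t => G.r i * (u i t + ε * w t) ^ 2)
        = fun t => G.r i * u i t ^ 2
            + ((2 * G.r i * ε) * (u i t * w t) + (G.r i * ε ^ 2) * (w t * w t)) := by
      funext t; ring
    have c1 : ∫ t in (0:ℝ)..T, (2 * G.r i * ε) * (u i t * w t) = (2 * G.r i * ε) * I1 := by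
      rw [intervalIntegral.integral_const_mul, ← hI1]
    have c2 : ∫ t in (0:ℝ)..T, (G.r i * ε ^ 2) * (w t * w t) = (G.r i * ε ^ 2) * I2 := by
      rw [intervalIntegral.integral_const_mul, ← hI2]
    rw [e1, intervalIntegral.integral_add hIru ((hIuw.const_mul _).add (hIww.const_mul _)),
      intervalIntegral.integral_add (hIuw.const_mul _) (hIww.const_mul _), c1, c2]
    ring
  -- the key variational inequality
  have hkey : ∀ ε : ℝ, 0 ≤ ε * ((1 / G.d i) * (2 * (z ⬝ᵥ q)) + 2 * G.r i * I1)
      + ε ^ 2 * ((1 / G.d i) * (z ⬝ᵥ Lh.mulVec z) + G.r i * I2) := by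
    intro ε
    have hvA : AdmissibleF (fun s => u i s + ε * w s) := by
      refine ⟨hum.add (measurable_const.mul hwm), Cu + |ε| * Cg, fun s => ?_⟩
      refine (abs_add_le _ _).trans ?_
      rw [abs_mul]
      exact add_le_add (hCu s) (mul_le_mul_of_nonneg_left (hwb s) (abs_nonneg ε))
    have hle := hNash.2 i _ hvA
    have heq : G.JF y0 i (Function.update u i fun s => u i s + ε * w s)
        = G.JF y0 i u + (ε * ((1 / G.d i) * (2 * (z ⬝ᵥ q)) + 2 * G.r i * I1)
          + ε ^ 2 * ((1 / G.d i) * (z ⬝ᵥ Lh.mulVec z) + G.r i * I2)) := by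
      unfold GameData.JF
      simp only [Function.update_self, ← hTdef, ← hLh, ← hy]
      rw [htraj ε, hQ ε, hInt ε]
      ring
    rw [heq] at hle
    linarith
  have ha0 : (1 / G.d i) * (2 * (z ⬝ᵥ q)) + 2 * G.r i * I1 = 0 :=
    eq_zero_of_quad_nonneg hkey
  -- z ⬝ᵥ q as an integral
  have hzq : z ⬝ᵥ q = ∫ s in (0:ℝ)..T, w s * p s := by
    let φ : (Fin n → ℝ) →L[ℝ] ℝ := LinearMap.toContinuousLinearMap
      { toFun := fun x => x ⬝ᵥ q
        map_add' := fun x v => add_dotProduct x v q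
        map_smul' := fun c x => by simp [smul_dotProduct] }
    have hφapp : ∀ x, φ x = x ⬝ᵥ q := fun x => rfl
    have hphi := φ.intervalIntegral_comp_comm hIz
    calc z ⬝ᵥ q = φ z := (hφapp z).symm
      _ = ∫ s in (0:ℝ)..T, φ (w s • F s) := by rw [hz]; exact hphi.symm
      _ = ∫ s in (0:ℝ)..T, w s * p s := by
          refine intervalIntegral.integral_congr fun s _ => ?_
          rw [hφapp, smul_dotProduct, smul_eq_mul, hp]
  -- the orthogonality relation for w
  have hwg : ∫ s in (0:ℝ)..T, w s * g s = 0 := by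
    have e2 : (fun s => w s * g s)
        = fun s => G.r i * (u i s * w s) + (1 / G.d i) * (w s * p s) := by
      funext s; simp only [hgdef]; ring
    rw [e2, intervalIntegral.integral_add (hIuw.const_mul _) (hIwp.const_mul _),
      intervalIntegral.integral_const_mul, intervalIntegral.integral_const_mul, ← hzq, ← hI1]
    linarith
  -- hence ∫ g² = 0
  have hgg0 : ∫ s in (0:ℝ)..T, g s * g s = 0 := by
    have hcong : ∫ s in (0:ℝ)..T, g s * g s = ∫ s in (0:ℝ)..T, w s * g s := by
      refine intervalIntegral.integral_congr fun s hs => ?_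
      have hsIcc : s ∈ Set.Icc (0:ℝ) T := by rwa [Set.uIcc_of_le hT] at hs
      show g s * g s = w s * g s
      rw [hwdef]
      simp only [if_pos hsIcc]
    rw [hcong, hwg]
  -- g = 0 a.e. on (0,T]
  have hae : ∀ᵐ s ∂(volume.restrict (Set.Ioc (0:ℝ) T)), g s = 0 := by
    have hint : IntervalIntegrable (fun s => g s * g s) volume 0 T := II_mul hgm hgm hgb hgb
    have h1 : IntegrableOn (fun s => g s * g s) (Set.Ioc (0:ℝ) T) volume := hint.1
    have h2 : ∫ s in Set.Ioc (0:ℝ) T, g s * g s ∂volume = 0 := by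
      rw [← intervalIntegral.integral_of_le hT]; exact hgg0
    have h3 := (integral_eq_zero_iff_of_nonneg_ae
      (Filter.Eventually.of_forall fun s => mul_self_nonneg (g s)) h1).1 h2
    filter_upwards [h3] with s hs
    exact mul_self_eq_zero.1 hs
  -- conclude
  rw [← MeasureTheory.restrict_Ioc_eq_restrict_Icc]
  filter_upwards [hae] with t hgt
  have hptq : G.Bhat i ⬝ᵥ (mexp ((T - t) • G.Λᵀ)).mulVec q = p t := by
    rw [hp]
    simp only [hF]
    rw [← mexp_smul_transpose, Matrix.mulVec_transpose, dotProduct_comm,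
      ← Matrix.dotProduct_mulVec, dotProduct_comm]
  rw [hptq]
  simp only [hgdef] at hgt
  have hri := hr i
  have hdi := hd i
  have hrd : G.r i * G.d i ≠ 0 := by positivity
  field_simp at hgt ⊢
  linarith
end
end

section
/- Assume H is invertible. If u and v are both open-loop Nash equilibria of the delay-free game from the same initial state y_0 ∈ ℝⁿ, then y_u(T) = y_v(T) = H⁻¹·exp(TΛ)·y_0 and, for every player i, u_i(t) = v_i(t) for almost every t ∈ [0,T]; i.e., the open-loop Nash equilibrium is unique (up to null sets). -/
open Matrix MeasureTheory
open scoped Matrix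

noncomputable section

section AuxUnique

open intervalIntegral

lemma mexp_continuous {n : ℕ} (A : Matrix (Fin n) (Fin n) ℝ) :
    Continuous fun s : ℝ => mexp (s • A) := by
  letI : SeminormedRing (Matrix (Fin n) (Fin n) ℝ) := Matrix.linftyOpSemiNormedRing
  letI : NormedRing (Matrix (Fin n) (Fin n) ℝ) := Matrix.linftyOpNormedRing
  letI : NormedAlgebra ℝ (Matrix (Fin n) (Fin n) ℝ) := Matrix.linftyOpNormedAlgebra
  letI : NormedAlgebra ℚ (Matrix (Fin n) (Fin n) ℝ) :=
    NormedAlgebra.restrictScalars ℚ ℝ (Matrix (Fin n) (Fin n) ℝ)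
  exact NormedSpace.exp_continuous.comp (continuous_id.smul continuous_const)

lemma mexp_transpose {n : ℕ} (c : ℝ) (A : Matrix (Fin n) (Fin n) ℝ) :
    mexp (c • Aᵀ) = (mexp (c • A))ᵀ := by
  rw [show c • Aᵀ = (c • A)ᵀ from (Matrix.transpose_smul c A).symm]
  exact Matrix.exp_transpose (c • A)

lemma II_bdd {E : Type*} [NormedAddCommGroup E] {f : ℝ → E} {a b : ℝ}
    (hm : AEStronglyMeasurable f (volume.restrict (Set.uIoc a b)))
    {C : ℝ} (hb : ∀ s ∈ Set.uIoc a b, ‖f s‖ ≤ C) :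
    IntervalIntegrable f volume a b := by
  rw [intervalIntegrable_iff]
  refine ⟨hm, ?_⟩
  haveI : IsFiniteMeasure (volume.restrict (Set.uIoc a b)) := by
    constructor
    rw [Measure.restrict_apply_univ]
    exact measure_Ioc_lt_top
  exact MeasureTheory.HasFiniteIntegral.of_bounded (C := C)
    ((ae_restrict_iff' measurableSet_uIoc).2 (Filter.Eventually.of_forall hb))

lemma cont_bound {E : Type*} [NormedAddCommGroup E] (f : ℝ → E) (hf : Continuous f) (a b : ℝ) :
    ∃ C, ∀ s ∈ Set.uIoc a b, ‖f s‖ ≤ C := by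
  obtain ⟨C, hC⟩ := (isCompact_uIcc (a := a) (b := b)).exists_bound_of_continuousOn
    hf.continuousOn
  exact ⟨C, fun s hs => hC s (Set.uIoc_subset_uIcc hs)⟩

lemma II_sc {h g : ℝ → ℝ} {a b : ℝ} (hm : Measurable h) (hgm : Measurable g)
    {C D : ℝ} (hC : ∀ s ∈ Set.uIoc a b, |h s| ≤ C) (hD : ∀ s ∈ Set.uIoc a b, |g s| ≤ D) :
    IntervalIntegrable (fun s => h s * g s) volume a b := by
  refine II_bdd ((hm.mul hgm).aestronglyMeasurable.restrict) (C := C * D) ?_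
  intro s hs
  have := mul_le_mul (hC s hs) (hD s hs) (abs_nonneg _) (le_trans (abs_nonneg _) (hC s hs))
  simpa [Real.norm_eq_abs, abs_mul] using this

lemma II_vec {n : ℕ} {h : ℝ → ℝ} {g : ℝ → Fin n → ℝ} {a b : ℝ}
    (hm : Measurable h) (hg : Continuous g)
    {C : ℝ} (hC : ∀ s ∈ Set.uIoc a b, |h s| ≤ C) :
    IntervalIntegrable (fun s => h s • g s) volume a b := by
  obtain ⟨D, hD⟩ := cont_bound g hg a b
  refine II_bdd ((hm.smul hg.measurable).aestronglyMeasurable.restrict) (C := C * D) ?_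
  intro s hs
  rw [norm_smul, Real.norm_eq_abs]
  exact mul_le_mul (hC s hs) (hD s hs) (norm_nonneg _) (le_trans (abs_nonneg _) (hC s hs))

lemma coeff_zero {c q : ℝ} (hq : 0 ≤ q) (h : ∀ ε : ℝ, 0 ≤ ε * (2 * c) + ε ^ 2 * q) : c = 0 := by
  by_contra hc
  have hc2 : 0 < c ^ 2 := by positivity
  have hq1 : (0:ℝ) < q + 1 := by linarith
  have h1 := h (-(c / (q + 1)))
  have hne : q + 1 ≠ 0 := ne_of_gt hq1
  field_simp at h1
  rw [zero_mul] at h1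
  nlinarith [mul_pos (mul_pos hc2 hq1) (show (0:ℝ) < q + 2 by linarith), mul_pos hc2 (show (0:ℝ) < q + 2 by linarith)]

/-- coordinate of a pi-valued interval integral -/
lemma intervalIntegral_apply {n : ℕ} {f : ℝ → Fin n → ℝ} {a b : ℝ}
    (hf : IntervalIntegrable f volume a b) (j : Fin n) :
    (∫ s in a..b, f s) j = ∫ s in a..b, f s j := by
  have := (ContinuousLinearMap.proj (R := ℝ) (φ := fun _ : Fin n => ℝ)
    j).intervalIntegral_comp_comm hf
  simpa using this.symm

lemma dotCLM_exists {n : ℕ} (c : Fin n → ℝ) :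
    ∃ L : (Fin n → ℝ) →L[ℝ] ℝ, ∀ x, L x = x ⬝ᵥ c := by
  refine ⟨LinearMap.toContinuousLinearMap
    { toFun := fun x => x ⬝ᵥ c
      map_add' := fun x y => add_dotProduct x y c
      map_smul' := fun m x => smul_dotProduct m x c }, fun x => rfl⟩

lemma intervalIntegral_dotProduct {n : ℕ} {f : ℝ → Fin n → ℝ} {a b : ℝ}
    (hf : IntervalIntegrable f volume a b) (c : Fin n → ℝ) :
    (∫ s in a..b, f s) ⬝ᵥ c = ∫ s in a..b, f s ⬝ᵥ c := by
  obtain ⟨L, hL⟩ := dotCLM_exists c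
  have := L.intervalIntegral_comp_comm hf
  simp only [hL] at this
  exact this.symm

lemma vecMulVec_mulVec' {n : ℕ} (a b c : Fin n → ℝ) :
    (vecMulVec a b).mulVec c = (b ⬝ᵥ c) • a := by
  funext x
  simp [Matrix.mulVec, Matrix.vecMulVec_apply, dotProduct, Finset.mul_sum,
    mul_assoc, mul_comm, mul_left_comm]

namespace GameData

variable {n : ℕ} (G : GameData n)

lemma Lhat_posSemidef (hG : G.Valid) (i : Fin n) : (G.Lhat i).PosSemidef := by
  have h := (hG.2.2.2.2.1 i).conjTranspose_mul_mul_same (mexp (G.τ • G.Λ))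
  have he : (mexp (G.τ • G.Λ))ᴴ = mexp (G.τ • G.Λᵀ) := by
    rw [Matrix.conjTranspose_eq_transpose_of_trivial, ← mexp_transpose]
  rw [he] at h
  exact h

lemma Lhat_symm_dot (hG : G.Valid) (i : Fin n) (p q : Fin n → ℝ) :
    p ⬝ᵥ (G.Lhat i).mulVec q = q ⬝ᵥ (G.Lhat i).mulVec p := by
  have hsymm : (G.Lhat i)ᵀ = G.Lhat i := by
    have := (G.Lhat_posSemidef hG i).1
    rwa [Matrix.IsHermitian, Matrix.conjTranspose_eq_transpose_of_trivial] at this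
  rw [Matrix.dotProduct_mulVec, ← Matrix.mulVec_transpose, hsymm, dotProduct_comm]

lemma Lhat_nonneg (hG : G.Valid) (i : Fin n) (p : Fin n → ℝ) :
    0 ≤ p ⬝ᵥ (G.Lhat i).mulVec p := by
  simpa using (G.Lhat_posSemidef hG i).dotProduct_mulVec_nonneg p

end GameData

end AuxUnique


section MainUnique

open intervalIntegral

namespace GameData

variable {n : ℕ}

theorem nashF_ae (G : GameData n) (hG : G.Valid) (y0 : Fin n → ℝ)
    (u : Fin n → ℝ → ℝ) (hu : G.NashF y0 u) (i : Fin n) :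
    ∀ᵐ t ∂(volume.restrict (Set.Ioc (0:ℝ) G.T)),
      u i t = -(1 / (G.d i * G.r i)) *
        ((mexp ((G.T - t) • G.Λ)).mulVec (G.Bhat i) ⬝ᵥ
          (G.Lhat i).mulVec (G.ytraj y0 u G.T)) := by
  have hr := hG.2.2.1
  have hd := hG.2.2.2.1
  have hT : 0 ≤ G.T := le_of_lt (sub_pos.2 hG.2.1)
  have huIoc : Set.uIoc (0:ℝ) G.T = Set.Ioc 0 G.T := Set.uIoc_of_le hT
  set y : Fin n → ℝ := G.ytraj y0 u G.T with hy
  have hMcont : Continuous fun s : ℝ => mexp ((G.T - s) • G.Λ) :=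
    (mexp_continuous G.Λ).comp (continuous_const.sub continuous_id : Continuous fun s : ℝ => G.T - s)
  have hgcont : ∀ j : Fin n,
      Continuous fun s : ℝ => (mexp ((G.T - s) • G.Λ)).mulVec (G.Bhat j) :=
    fun j => hMcont.matrix_mulVec continuous_const
  have hkcont : Continuous fun t : ℝ =>
      (mexp ((G.T - t) • G.Λ)).mulVec (G.Bhat i) ⬝ᵥ (G.Lhat i).mulVec y :=
    (hgcont i).dotProduct continuous_const
  -- integrability of the basic integrands
  have hIsm : ∀ h : ℝ → ℝ, Measurable h → (∃ C, ∀ s, |h s| ≤ C) → ∀ j : Fin n,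
      IntervalIntegrable (fun s => h s • (mexp ((G.T - s) • G.Λ)).mulVec (G.Bhat j))
        volume 0 G.T := by
    rintro h hm ⟨C, hC⟩ j
    exact II_vec hm (hgcont j) (fun s _ => hC s)
  have hIsum : IntervalIntegrable
      (fun s => ∑ j, u j s • (mexp ((G.T - s) • G.Λ)).mulVec (G.Bhat j)) volume 0 G.T := by
    rw [intervalIntegrable_iff]
    exact MeasureTheory.integrable_finset_sum _ fun j _ =>
      intervalIntegrable_iff.mp (hIsm (u j) (hu.1 j).1 (hu.1 j).2 j)
  have hsum_eq : ∀ (h : Fin n → ℝ → ℝ) (s : ℝ),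
      (mexp ((G.T - s) • G.Λ)).mulVec (∑ j, h j s • G.Bhat j)
        = ∑ j, h j s • (mexp ((G.T - s) • G.Λ)).mulVec (G.Bhat j) := by
    intro h s
    rw [← Matrix.mulVecLin_apply, map_sum]
    simp [Matrix.mulVecLin_apply]
  -- Step A : first variation vanishes
  have stepA : ∀ w : ℝ → ℝ, Measurable w → (∃ C, ∀ s, |w s| ≤ C) →
      (1 / G.d i) * ((∫ s in (0:ℝ)..G.T,
          w s • (mexp ((G.T - s) • G.Λ)).mulVec (G.Bhat i)) ⬝ᵥ (G.Lhat i).mulVec y) +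
        (∫ t in (0:ℝ)..G.T, G.r i * (u i t * w t)) = 0 := by
    intro w hwm hwb
    obtain ⟨Cw, hCw⟩ := hwb
    obtain ⟨Cu, hCu⟩ := (hu.1 i).2
    set aw : Fin n → ℝ :=
      ∫ s in (0:ℝ)..G.T, w s • (mexp ((G.T - s) • G.Λ)).mulVec (G.Bhat i) with haw
    set c : ℝ := (1 / G.d i) * (aw ⬝ᵥ (G.Lhat i).mulVec y) +
        (∫ t in (0:ℝ)..G.T, G.r i * (u i t * w t)) with hc
    set q : ℝ := (1 / G.d i) * (aw ⬝ᵥ (G.Lhat i).mulVec aw) +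
        (∫ t in (0:ℝ)..G.T, G.r i * w t ^ 2) with hq
    have hIw : IntervalIntegrable
        (fun s => w s • (mexp ((G.T - s) • G.Λ)).mulVec (G.Bhat i)) volume 0 G.T :=
      hIsm w hwm ⟨Cw, hCw⟩ i
    have traj : ∀ ε : ℝ,
        G.ytraj y0 (Function.update u i fun s => u i s + ε * w s) G.T = y + ε • aw := by
      intro ε
      have hupd : ∀ s : ℝ,
          (∑ j, Function.update u i (fun s' => u i s' + ε * w s') j s • G.Bhat j)
            = (∑ j, u j s • G.Bhat j) + (ε * w s) • G.Bhat i := by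
        intro s
        have h1 : ∀ j : Fin n,
            Function.update u i (fun s' => u i s' + ε * w s') j s • G.Bhat j
              = u j s • G.Bhat j + (if j = i then (ε * w s) • G.Bhat i else 0) := by
          intro j
          by_cases hj : j = i
          · subst hj
            simp [Function.update_self, add_smul]
          · simp [Function.update_of_ne hj, hj]
        rw [Finset.sum_congr rfl fun j _ => h1 j, Finset.sum_add_distrib,
          Finset.sum_ite_eq' Finset.univ i]
        simp
      rw [hy, GameData.ytraj, GameData.ytraj]
      have hre : (fun s => (mexp ((G.T - s) • G.Λ)).mulVec
            (∑ j, Function.update u i (fun s' => u i s' + ε * w s') j s • G.Bhat j))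
          = fun s => (∑ j, u j s • (mexp ((G.T - s) • G.Λ)).mulVec (G.Bhat j))
              + ε • (w s • (mexp ((G.T - s) • G.Λ)).mulVec (G.Bhat i)) := by
        funext s
        rw [hupd s, Matrix.mulVec_add, hsum_eq u s, Matrix.mulVec_smul, mul_smul]
      have hIw' : IntervalIntegrable
          (fun s => ε • (w s • (mexp ((G.T - s) • G.Λ)).mulVec (G.Bhat i))) volume 0 G.T := by
        exact hIw.smul ε
      rw [hre, intervalIntegral.integral_add hIsum hIw', intervalIntegral.integral_smul]
      have hre2 : (fun s => (mexp ((G.T - s) • G.Λ)).mulVec (∑ j, u j s • G.Bhat j))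
          = fun s => ∑ j, u j s • (mexp ((G.T - s) • G.Λ)).mulVec (G.Bhat j) := by
        funext s; exact hsum_eq u s
      rw [hre2, add_assoc]
    -- cost expansion
    have cost : ∀ ε : ℝ,
        G.JF y0 i (Function.update u i fun s => u i s + ε * w s)
          = G.JF y0 i u + (ε * (2 * c) + ε ^ 2 * q) := by
      intro ε
      have hIw2 : IntervalIntegrable (fun t => G.r i * w t ^ 2) volume 0 G.T := by
        have := (II_sc (a := 0) (b := G.T) hwm hwm (fun s _ => hCw s)
          (fun s _ => hCw s)).const_mul (G.r i)
        simpa [pow_two] using this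
      have hIuw : IntervalIntegrable (fun t => G.r i * (u i t * w t)) volume 0 G.T :=
        (II_sc (hu.1 i).1 hwm (fun s _ => hCu s) (fun s _ => hCw s)).const_mul (G.r i)
      have hIu2 : IntervalIntegrable (fun t => G.r i * u i t ^ 2) volume 0 G.T := by
        have := (II_sc (a := 0) (b := G.T) (hu.1 i).1 (hu.1 i).1 (fun s _ => hCu s)
          (fun s _ => hCu s)).const_mul (G.r i)
        simpa [pow_two] using this
      simp only [GameData.JF, traj ε, Function.update_self, ← hy]
      have hquad : (y + ε • aw) ⬝ᵥ (G.Lhat i).mulVec (y + ε • aw)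
          = y ⬝ᵥ (G.Lhat i).mulVec y + ε * (2 * (aw ⬝ᵥ (G.Lhat i).mulVec y))
            + ε ^ 2 * (aw ⬝ᵥ (G.Lhat i).mulVec aw) := by
        rw [Matrix.mulVec_add, Matrix.mulVec_smul]
        simp only [dotProduct_add, add_dotProduct, dotProduct_smul,
          smul_dotProduct, smul_eq_mul]
        rw [G.Lhat_symm_dot hG i y aw]
        ring
      rw [hquad]
      have hre : (fun t => G.r i * (u i t + ε * w t) ^ 2)
          = fun t => G.r i * u i t ^ 2
              + (ε * (2 * (G.r i * (u i t * w t))) + ε ^ 2 * (G.r i * w t ^ 2)) := by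
        funext t; ring
      rw [hre, intervalIntegral.integral_add hIu2 (((hIuw.const_mul 2).const_mul ε).add
          (hIw2.const_mul (ε ^ 2))),
        intervalIntegral.integral_add ((hIuw.const_mul 2).const_mul ε) (hIw2.const_mul (ε ^ 2)),
        hc, hq]
      simp only [intervalIntegral.integral_const_mul]
      ring
    have hadm : ∀ ε : ℝ, AdmissibleF fun s => u i s + ε * w s := by
      intro ε
      refine ⟨(hu.1 i).1.add (hwm.const_mul ε), ⟨Cu + |ε| * Cw, fun s => ?_⟩⟩
      calc |u i s + ε * w s| ≤ |u i s| + |ε * w s| := abs_add_le _ _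
        _ ≤ Cu + |ε| * Cw := by
            rw [abs_mul]
            exact add_le_add (hCu s)
              (mul_le_mul_of_nonneg_left (hCw s) (abs_nonneg ε))
    have hineq : ∀ ε : ℝ, 0 ≤ ε * (2 * c) + ε ^ 2 * q := by
      intro ε
      have h2 := hu.2 i (fun s => u i s + ε * w s) (hadm ε)
      rw [cost ε] at h2
      linarith
    have hqnn : 0 ≤ q := by
      have h1 : 0 ≤ aw ⬝ᵥ (G.Lhat i).mulVec aw := G.Lhat_nonneg hG i aw
      have h2 : 0 ≤ ∫ t in (0:ℝ)..G.T, G.r i * w t ^ 2 :=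
        intervalIntegral.integral_nonneg hT
          (fun t _ => mul_nonneg (le_of_lt (hr i)) (sq_nonneg _))
      have h3 : 0 ≤ (1:ℝ) / G.d i := by
        have := hd i; positivity
      rw [hq]
      exact add_nonneg (mul_nonneg h3 h1) h2
    exact coeff_zero hqnn hineq
  -- Step B : fundamental lemma of the calculus of variations
  set k : ℝ → ℝ :=
    fun t => (mexp ((G.T - t) • G.Λ)).mulVec (G.Bhat i) ⬝ᵥ (G.Lhat i).mulVec y with hk
  set F : ℝ → ℝ := fun t => (1 / G.d i) * k t + G.r i * u i t with hF
  have hFm : Measurable F :=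
    (hkcont.measurable.const_mul _).add ((hu.1 i).1.const_mul _)
  obtain ⟨Ck, hCk⟩ := cont_bound k hkcont 0 G.T
  obtain ⟨Cu, hCu⟩ := (hu.1 i).2
  have hFb : ∀ s ∈ Set.uIoc (0:ℝ) G.T, |F s| ≤ |1 / G.d i| * Ck + |G.r i| * Cu := by
    intro s hs
    have hks : |k s| ≤ Ck := by
      have := hCk s hs; rwa [Real.norm_eq_abs] at this
    calc |F s| ≤ |(1 / G.d i) * k s| + |G.r i * u i s| := abs_add_le _ _
      _ = |1 / G.d i| * |k s| + |G.r i| * |u i s| := by rw [abs_mul, abs_mul]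
      _ ≤ |1 / G.d i| * Ck + |G.r i| * Cu :=
          add_le_add (mul_le_mul_of_nonneg_left hks (abs_nonneg _))
            (mul_le_mul_of_nonneg_left (hCu s) (abs_nonneg _))
  set w : ℝ → ℝ := (Set.Ioc (0:ℝ) G.T).indicator F with hw
  have hwm : Measurable w := hFm.indicator measurableSet_Ioc
  have hwb : ∃ C, ∀ s, |w s| ≤ C := by
    refine ⟨max (|1 / G.d i| * Ck + |G.r i| * Cu) 0, fun s => ?_⟩
    by_cases hs : s ∈ Set.Ioc (0:ℝ) G.T
    · rw [hw, Set.indicator_of_mem hs]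
      exact le_max_of_le_left (hFb s (huIoc ▸ hs))
    · rw [hw, Set.indicator_of_notMem hs]
      simp
  have hA := stepA w hwm hwb
  have hIw : IntervalIntegrable
      (fun s => w s • (mexp ((G.T - s) • G.Λ)).mulVec (G.Bhat i)) volume 0 G.T :=
    hIsm w hwm hwb i
  rw [intervalIntegral_dotProduct hIw] at hA
  have hdot : (fun s => (w s • (mexp ((G.T - s) • G.Λ)).mulVec (G.Bhat i))
        ⬝ᵥ (G.Lhat i).mulVec y) = fun s => w s * k s := by
    funext s
    rw [smul_dotProduct, smul_eq_mul]
  rw [hdot] at hA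
  obtain ⟨Cwb, hCwb⟩ := hwb
  have hIk : IntervalIntegrable (fun s => w s * k s) volume 0 G.T :=
    II_sc hwm hkcont.measurable (fun s _ => hCwb s) (fun s hs => by
      have := hCk s hs; rwa [Real.norm_eq_abs] at this)
  have hIuw : IntervalIntegrable (fun t => G.r i * (u i t * w t)) volume 0 G.T :=
    (II_sc (hu.1 i).1 hwm (fun s _ => hCu s) (fun s _ => hCwb s)).const_mul (G.r i)
  rw [← intervalIntegral.integral_const_mul, ← intervalIntegral.integral_add (hIk.const_mul _) hIuw] at hA
  have hAF : (∫ s in (0:ℝ)..G.T, w s * F s) = 0 := by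
    have hcongr : (∫ s in (0:ℝ)..G.T, w s * F s)
        = ∫ s in (0:ℝ)..G.T, 1 / G.d i * (w s * k s) + G.r i * (u i s * w s) := by
      apply intervalIntegral.integral_congr
      intro s _
      rw [hF]
      ring
    rw [hcongr, hA]
  rw [intervalIntegral.integral_of_le hT] at hAF
  have hAF2 : (∫ s in Set.Ioc (0:ℝ) G.T, F s ^ 2) = 0 := by
    have hcongr : (∫ s in Set.Ioc (0:ℝ) G.T, F s ^ 2)
        = ∫ s in Set.Ioc (0:ℝ) G.T, w s * F s := by
      apply setIntegral_congr_fun measurableSet_Ioc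
      intro s hs
      show F s ^ 2 = (Set.Ioc (0:ℝ) G.T).indicator F s * F s
      rw [Set.indicator_of_mem hs]
      ring
    rw [hcongr]
    exact hAF
  have hInt : IntegrableOn (fun s => F s ^ 2) (Set.Ioc (0:ℝ) G.T) volume := by
    have h2 : IntervalIntegrable (fun s => F s * F s) volume 0 G.T := II_sc hFm hFm hFb hFb
    rw [intervalIntegrable_iff, huIoc] at h2
    simpa [pow_two] using h2
  have hzero : (fun s => F s ^ 2) =ᵐ[volume.restrict (Set.Ioc (0:ℝ) G.T)] 0 :=
    (integral_eq_zero_iff_of_nonneg (fun s => sq_nonneg (F s)) hInt).mp hAF2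
  filter_upwards [hzero] with t ht
  have hFt : F t = 0 := by
    have ht' : F t ^ 2 = 0 := ht
    exact pow_eq_zero_iff two_ne_zero |>.mp ht'
  have hFt' : (1 / G.d i) * k t + G.r i * u i t = 0 := hFt
  have hdne : G.d i ≠ 0 := ne_of_gt (hd i)
  have hrne : G.r i ≠ 0 := ne_of_gt (hr i)
  show u i t = -(1 / (G.d i * G.r i)) * k t
  field_simp at hFt' ⊢
  linarith

end GameData

end MainUnique


section Hequation

open intervalIntegral

lemma sum_mulVec' {n : ℕ} (f : Fin n → Matrix (Fin n) (Fin n) ℝ) (v : Fin n → ℝ) :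
    (∑ j, f j) *ᵥ v = ∑ j, f j *ᵥ v := by
  funext a
  simp only [Matrix.mulVec, dotProduct, Finset.sum_apply, Matrix.sum_apply, Finset.sum_mul]
  rw [Finset.sum_comm]

namespace GameData

variable {n : ℕ}

theorem nashF_H (G : GameData n) (hG : G.Valid) (y0 : Fin n → ℝ)
    (u : Fin n → ℝ → ℝ) (hu : G.NashF y0 u) :
    G.H.mulVec (G.ytraj y0 u G.T) = (mexp (G.T • G.Λ)).mulVec y0 := by
  have hr := hG.2.2.1
  have hd := hG.2.2.2.1
  have hT : 0 ≤ G.T := le_of_lt (sub_pos.2 hG.2.1)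
  have huIoc : Set.uIoc (0:ℝ) G.T = Set.Ioc 0 G.T := Set.uIoc_of_le hT
  set y : Fin n → ℝ := G.ytraj y0 u G.T with hy
  have hMcont : Continuous fun s : ℝ => mexp ((G.T - s) • G.Λ) :=
    (mexp_continuous G.Λ).comp (continuous_const.sub continuous_id : Continuous fun s : ℝ => G.T - s)
  have hMTcont : Continuous fun s : ℝ => mexp ((G.T - s) • G.Λᵀ) :=
    (mexp_continuous G.Λᵀ).comp (continuous_const.sub continuous_id : Continuous fun s : ℝ => G.T - s)
  have hgcont : ∀ j : Fin n,
      Continuous fun s : ℝ => (mexp ((G.T - s) • G.Λ)).mulVec (G.Bhat j) :=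
    fun j => hMcont.matrix_mulVec continuous_const
  have hIsm : ∀ j : Fin n,
      IntervalIntegrable (fun s => u j s • (mexp ((G.T - s) • G.Λ)).mulVec (G.Bhat j))
        volume 0 G.T := by
    intro j
    obtain ⟨C, hC⟩ := (hu.1 j).2
    exact II_vec (hu.1 j).1 (hgcont j) (fun s _ => hC s)
  have hsum_eq : ∀ s : ℝ,
      (mexp ((G.T - s) • G.Λ)).mulVec (∑ j, u j s • G.Bhat j)
        = ∑ j, u j s • (mexp ((G.T - s) • G.Λ)).mulVec (G.Bhat j) := by
    intro s
    rw [← Matrix.mulVecLin_apply, map_sum]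
    simp [Matrix.mulVecLin_apply]
  -- closed form of each player's integral term
  have key : ∀ j : Fin n,
      (∫ s in (0:ℝ)..G.T, u j s • (mexp ((G.T - s) • G.Λ)).mulVec (G.Bhat j))
        = -((1 / G.d j) • ((G.Psi j * G.Lhat j).mulVec y)) := by
    intro j
    have hae := G.nashF_ae hG y0 u hu j
    have hae' : ∀ᵐ s ∂volume, s ∈ Set.uIoc (0:ℝ) G.T →
        u j s • (mexp ((G.T - s) • G.Λ)).mulVec (G.Bhat j)
          = (-(1 / (G.d j * G.r j)) *
              ((mexp ((G.T - s) • G.Λ)).mulVec (G.Bhat j) ⬝ᵥ (G.Lhat j).mulVec y))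
            • (mexp ((G.T - s) • G.Λ)).mulVec (G.Bhat j) := by
      rw [huIoc]
      have h1 := (ae_restrict_iff' measurableSet_Ioc).mp hae
      filter_upwards [h1] with s hs hmem
      rw [hs hmem]
    rw [intervalIntegral.integral_congr_ae hae']
    have hptw : ∀ s : ℝ,
        (-(1 / (G.d j * G.r j)) *
            ((mexp ((G.T - s) • G.Λ)).mulVec (G.Bhat j) ⬝ᵥ (G.Lhat j).mulVec y))
          • (mexp ((G.T - s) • G.Λ)).mulVec (G.Bhat j)
        = -((1 / G.d j) •
            ((mexp ((G.T - s) • G.Λ) * G.S j * mexp ((G.T - s) • G.Λᵀ)).mulVec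
              ((G.Lhat j).mulVec y))) := by
      intro s
      have hsc : G.Bhat j ⬝ᵥ ((mexp ((G.T - s) • G.Λ))ᵀ *ᵥ ((G.Lhat j) *ᵥ y))
          = (mexp ((G.T - s) • G.Λ) *ᵥ G.Bhat j) ⬝ᵥ ((G.Lhat j) *ᵥ y) := by
        rw [Matrix.dotProduct_mulVec, Matrix.vecMul_transpose]
      rw [mexp_transpose, ← Matrix.mulVec_mulVec, ← Matrix.mulVec_mulVec]
      rw [GameData.S, Matrix.smul_mulVec, vecMulVec_mulVec', hsc]
      rw [Matrix.mulVec_smul, Matrix.mulVec_smul]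
      rw [smul_smul, smul_smul, ← neg_smul]
      congr 1
      ring
    have hre : (fun s =>
        (-(1 / (G.d j * G.r j)) *
            ((mexp ((G.T - s) • G.Λ)).mulVec (G.Bhat j) ⬝ᵥ (G.Lhat j).mulVec y))
          • (mexp ((G.T - s) • G.Λ)).mulVec (G.Bhat j))
        = fun s => -((1 / G.d j) •
            ((mexp ((G.T - s) • G.Λ) * G.S j * mexp ((G.T - s) • G.Λᵀ)).mulVec
              ((G.Lhat j).mulVec y))) := funext hptw
    rw [hre, intervalIntegral.integral_neg, intervalIntegral.integral_smul]
    -- identify the remaining integral with `Psi j`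
    have hNcont : Continuous fun s : ℝ =>
        mexp ((G.T - s) • G.Λ) * G.S j * mexp ((G.T - s) • G.Λᵀ) :=
      (hMcont.matrix_mul continuous_const).matrix_mul hMTcont
    have hNvcont : Continuous fun s : ℝ =>
        (mexp ((G.T - s) • G.Λ) * G.S j * mexp ((G.T - s) • G.Λᵀ)).mulVec
          ((G.Lhat j).mulVec y) := hNcont.matrix_mulVec continuous_const
    have hII := hNvcont.intervalIntegrable (μ := volume) (a := 0) (b := G.T)
    have hPsi : (∫ s in (0:ℝ)..G.T,
        (mexp ((G.T - s) • G.Λ) * G.S j * mexp ((G.T - s) • G.Λᵀ)).mulVec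
          ((G.Lhat j).mulVec y)) = (G.Psi j).mulVec ((G.Lhat j).mulVec y) := by
      funext a
      rw [intervalIntegral_apply hII a]
      have hco : ∀ s : ℝ,
          ((mexp ((G.T - s) • G.Λ) * G.S j * mexp ((G.T - s) • G.Λᵀ)).mulVec
            ((G.Lhat j).mulVec y)) a
          = ∑ b, (mexp ((G.T - s) • G.Λ) * G.S j * mexp ((G.T - s) • G.Λᵀ)) a b *
              ((G.Lhat j).mulVec y) b := fun s => rfl
      simp only [hco]
      rw [intervalIntegral.integral_finset_sum]
      · apply Finset.sum_congr rfl
        intro b _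
        rw [intervalIntegral.integral_mul_const]
        congr 1
      · intro b _
        exact ((hNcont.matrix_elem a b).mul continuous_const).intervalIntegrable _ _
    rw [hPsi, Matrix.mulVec_mulVec]
  -- assemble
  have hyeq : y = (mexp (G.T • G.Λ)).mulVec y0
      + ∑ j, -((1 / G.d j) • ((G.Psi j * G.Lhat j).mulVec y)) := by
    conv_lhs => rw [hy, GameData.ytraj]
    congr 1
    have hre2 : (fun s => (mexp ((G.T - s) • G.Λ)).mulVec (∑ j, u j s • G.Bhat j))
        = fun s => ∑ j, u j s • (mexp ((G.T - s) • G.Λ)).mulVec (G.Bhat j) :=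
      funext hsum_eq
    rw [hre2, intervalIntegral.integral_finset_sum (fun j _ => hIsm j)]
    exact Finset.sum_congr rfl fun j _ => key j
  rw [GameData.H, Matrix.add_mulVec, Matrix.one_mulVec, sum_mulVec']
  have h2 : ∀ j : Fin n, ((1 / G.d j) • (G.Psi j * G.Lhat j)) *ᵥ y
      = (1 / G.d j) • ((G.Psi j * G.Lhat j) *ᵥ y) := fun j => Matrix.smul_mulVec _ _ _
  simp only [h2]
  rw [Finset.sum_neg_distrib] at hyeq
  set S : Fin n → ℝ := ∑ j, (1 / G.d j) • ((G.Psi j * G.Lhat j) *ᵥ y) with hS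
  rw [hyeq]
  abel

end GameData

end Hequation

/-- Uniqueness of the open-loop Nash equilibrium of the delay-free game when `H` is
invertible: any two equilibria `u, v` from the same initial state `y₀` satisfy
`y_u(T) = y_v(T) = H⁻¹·exp(TΛ)·y₀` and `uᵢ = vᵢ` almost everywhere on `[0,T]`. -/
theorem statement_10 {n : ℕ} (G : GameData n) (hG : G.Valid) (hH : IsUnit G.H)
    (y0 : Fin n → ℝ) (u v : Fin n → ℝ → ℝ)
    (hu : G.NashF y0 u) (hv : G.NashF y0 v) :
    G.ytraj y0 u G.T = G.H⁻¹.mulVec ((mexp (G.T • G.Λ)).mulVec y0) ∧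
      G.ytraj y0 v G.T = G.H⁻¹.mulVec ((mexp (G.T • G.Λ)).mulVec y0) ∧
      ∀ i, ∀ᵐ t ∂(volume.restrict (Set.Icc (0:ℝ) G.T)), u i t = v i t := by
  have hdet : IsUnit G.H.det := (Matrix.isUnit_iff_isUnit_det G.H).mp hH
  have hsolve : ∀ w : Fin n → ℝ, G.H.mulVec w = (mexp (G.T • G.Λ)).mulVec y0 →
      w = G.H⁻¹.mulVec ((mexp (G.T • G.Λ)).mulVec y0) := by
    intro w hw
    rw [← hw, Matrix.mulVec_mulVec, Matrix.nonsing_inv_mul G.H hdet, Matrix.one_mulVec]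
  have hyu := hsolve _ (G.nashF_H hG y0 u hu)
  have hyv := hsolve _ (G.nashF_H hG y0 v hv)
  refine ⟨hyu, hyv, ?_⟩
  intro i
  have hrest : volume.restrict (Set.Icc (0:ℝ) G.T) = volume.restrict (Set.Ioc 0 G.T) :=
    (Measure.restrict_congr_set Ioc_ae_eq_Icc).symm
  rw [hrest]
  have h1 := G.nashF_ae hG y0 u hu i
  have h2 := G.nashF_ae hG y0 v hv i
  filter_upwards [h1, h2] with t ht1 ht2
  rw [ht1, ht2, hyu, hyv]
end
end
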